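/- arXiv:2305.18636 — 2 statements merged into one kernel-verified Lean document; each statement's English description precedes it below -/
import Mathlib

section
/- Fix $d\ge 1$, $p>0$ and $\eta\in(0,\min(1/2,p/d)]$. Define $\varphi(x)=x^2$ if $p>d/2$, $\varphi(x)=(x/\log(2+1/x))^2$ if $p=d/2$, $\varphi(x)=x^{d/p}$ if $p<d/2$, and define $\varphi_\eta(x)=x^{1/\eta}$ if $p\ne d/2$, $\varphi_\eta(x)=x^{1/\eta}/(\log(2+1/x))^2$ if $p=d/2$. Then for all $x>0$ and all $a$ with $x^{1/\eta}\le a\le 1$: $a\,\varphi(x/a^{\eta})\ge \varphi_\eta(x)$. -/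
open Real

lemma aux_key (η c x a : ℝ) (hη : 0 < η) (hc : 0 ≤ c) (hηc : η * c ≤ 1)
    (hx : 0 < x) (ha1 : x ^ (1/η) ≤ a) (ha2 : a ≤ 1) :
    x ^ (1/η) ≤ a * (x / a ^ η) ^ c := by
  have hxpow : (0:ℝ) < x ^ (1/η) := Real.rpow_pos_of_pos hx _
  have ha : 0 < a := lt_of_lt_of_le hxpow ha1
  have haη : (0:ℝ) < a ^ η := Real.rpow_pos_of_pos ha _
  have h1 : a * (x / a ^ η) ^ c = a ^ (1 - η * c) * x ^ c := by
    rw [Real.div_rpow hx.le haη.le, ← Real.rpow_mul ha.le, Real.rpow_sub ha, Real.rpow_one]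
    ring
  have h2 : x ^ ((1 - η * c)/η) ≤ a ^ (1 - η * c) := by
    have : x ^ ((1 - η * c)/η) = (x ^ (1/η)) ^ (1 - η * c) := by
      rw [← Real.rpow_mul hx.le]
      congr 1
      field_simp
    rw [this]
    exact Real.rpow_le_rpow hxpow.le ha1 (by linarith)
  have h3 : x ^ ((1 - η * c)/η) * x ^ c = x ^ (1/η) := by
    rw [← Real.rpow_add hx]
    congr 1
    field_simp
    ring
  calc x ^ (1/η) = x ^ ((1 - η * c)/η) * x ^ c := h3.symm
    _ ≤ a ^ (1 - η * c) * x ^ c :=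
        mul_le_mul_of_nonneg_right h2 (Real.rpow_nonneg hx.le c)
    _ = a * (x / a ^ η) ^ c := h1.symm

/-- Lemma (phi b): a·φ(x/a^η) ≥ φ_η(x) for x^{1/η} ≤ a ≤ 1. -/
theorem stmt2 (d : ℕ) (hd : 1 ≤ d) (p η : ℝ) (hp : 0 < p)
    (hη : η ∈ Set.Ioc (0 : ℝ) (min (1/2) (p / d)))
    (φ : ℝ → ℝ)
    (hφ : ∀ x : ℝ, φ x =
      if p > (d : ℝ) / 2 then x ^ 2
      else if p = (d : ℝ) / 2 then (x / Real.log (2 + 1/x)) ^ 2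
      else x ^ ((d : ℝ) / p))
    (φη : ℝ → ℝ)
    (hφη : ∀ x : ℝ, φη x =
      if p = (d : ℝ) / 2 then x ^ (1/η) / (Real.log (2 + 1/x)) ^ 2 else x ^ (1/η)) :
    ∀ x > (0 : ℝ), ∀ a : ℝ, x ^ (1/η) ≤ a → a ≤ 1 →
      a * φ (x / a ^ η) ≥ φη x := by
  obtain ⟨hη0, hηle⟩ := hη
  have hd1 : (1:ℝ) ≤ (d:ℝ) := by exact_mod_cast hd
  have hηhalf : η ≤ 1/2 := le_trans hηle (min_le_left _ _)
  have hηpd : η ≤ p / d := le_trans hηle (min_le_right _ _)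
  intro x hx a ha1 ha2
  have hxpow : (0:ℝ) < x ^ (1/η) := Real.rpow_pos_of_pos hx _
  have ha : 0 < a := lt_of_lt_of_le hxpow ha1
  have haη : (0:ℝ) < a ^ η := Real.rpow_pos_of_pos ha _
  have haη1 : a ^ η ≤ 1 := Real.rpow_le_one ha.le ha2 hη0.le
  have hy : 0 < x / a ^ η := div_pos hx haη
  rw [hφ, hφη]
  by_cases hpd : p = (d:ℝ)/2
  · -- critical case
    have hnp : ¬ p > (d:ℝ)/2 := by rw [hpd]; exact lt_irrefl _
    rw [if_neg hnp, if_pos hpd, if_pos hpd]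
    -- key inequality with c = 2
    have hkey : x ^ (1/η) ≤ a * (x / a ^ η) ^ (2:ℝ) :=
      aux_key η 2 x a hη0 (by norm_num) (by linarith) hx ha1 ha2
    rw [Real.rpow_two] at hkey
    have hL : (0:ℝ) < Real.log (2 + 1/(x / a ^ η)) := by
      apply Real.log_pos
      have : (0:ℝ) < 1/(x / a ^ η) := by positivity
      linarith
    have hM : (0:ℝ) < Real.log (2 + 1/x) := by
      apply Real.log_pos
      have : (0:ℝ) < 1/x := by positivity
      linarith
    have hLM : Real.log (2 + 1/(x / a ^ η)) ≤ Real.log (2 + 1/x) := by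
      apply Real.log_le_log (by positivity)
      have h1 : 1/(x / a ^ η) = a ^ η / x := by rw [one_div_div]
      rw [h1]
      have : a ^ η / x ≤ 1 / x := by gcongr
      linarith
    have hL2 : Real.log (2 + 1/(x / a ^ η)) ^ 2 ≤ Real.log (2 + 1/x) ^ 2 :=
      pow_le_pow_left₀ hL.le hLM 2
    rw [ge_iff_le, div_pow]
    calc x ^ (1/η) / Real.log (2 + 1/x) ^ 2
        ≤ x ^ (1/η) / Real.log (2 + 1/(x / a ^ η)) ^ 2 := by gcongr
      _ ≤ (a * (x / a ^ η) ^ 2) / Real.log (2 + 1/(x / a ^ η)) ^ 2 := by gcongr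
      _ = a * ((x / a ^ η) ^ 2 / Real.log (2 + 1/(x / a ^ η)) ^ 2) := by ring
  · have hnpd : ¬ p = (d:ℝ)/2 := hpd
    simp only [hnpd, if_false]
    by_cases hgt : p > (d:ℝ)/2
    · simp only [hgt, if_true]
      have hkey : x ^ (1/η) ≤ a * (x / a ^ η) ^ (2:ℝ) :=
        aux_key η 2 x a hη0 (by norm_num) (by linarith) hx ha1 ha2
      rw [Real.rpow_two] at hkey
      exact hkey
    · simp only [hgt, if_false]
      have hdp0 : (0:ℝ) < (d:ℝ)/p := by positivity
      have : η * ((d:ℝ)/p) ≤ 1 := by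
        have hpd0 : (0:ℝ) < p / d := by positivity
        calc η * ((d:ℝ)/p) ≤ (p/d) * ((d:ℝ)/p) :=
          mul_le_mul_of_nonneg_right hηpd hdp0.le
        _ = 1 := by field_simp
      exact aux_key η ((d:ℝ)/p) x a hη0 hdp0.le this hx ha1 ha2
end

section
/- Let $x>0$ and $a\ge x$. Then $\log(2+a/x)\le \log(2+1/x)\,\big(\log(\max(a,1))/\log(2+1/a)+1\big)$. -/
open Real

/-- log(2 + a/x) ≤ log(2 + 1/x)·(log(max(a,1))/log(2+1/a) + 1) for 0 < x ≤ a. -/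
theorem stmt4 (a x : ℝ) (hx : 0 < x) (hax : x ≤ a) :
    Real.log (2 + a / x) ≤
      Real.log (2 + 1/x) * (Real.log (max a 1) / Real.log (2 + 1/a) + 1) := by
  have ha : 0 < a := lt_of_lt_of_le hx hax
  rcases le_or_gt a 1 with h1 | h1
  · have hmax : max a 1 = 1 := max_eq_right h1
    rw [hmax, Real.log_one, zero_div, zero_add, mul_one]
    apply Real.log_le_log (by positivity)
    gcongr
  · -- a > 1
    have hmax : max a 1 = a := max_eq_left h1.le
    rw [hmax]
    have hla : 0 < Real.log a := Real.log_pos h1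
    have hx1 : (0:ℝ) < 2 + 1/x := by positivity
    have ha1 : (0:ℝ) < 2 + 1/a := by positivity
    have hll : Real.log (2 + 1/a) ≤ Real.log (2 + 1/x) := by
      apply Real.log_le_log ha1
      gcongr
    have hla1 : 0 < Real.log (2 + 1/a) := Real.log_pos (by
      have : 0 < 1/a := by positivity
      linarith)
    have step1 : Real.log (2 + a / x) ≤ Real.log a + Real.log (2 + 1/x) := by
      rw [← Real.log_mul (ne_of_gt ha) (ne_of_gt hx1)]
      apply Real.log_le_log (by positivity)
      have : a * (2 + 1/x) = 2*a + a/x := by ring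
      rw [this]
      linarith
    have step2 : Real.log a ≤ Real.log (2 + 1/x) * (Real.log a / Real.log (2 + 1/a)) := by
      have h := mul_le_mul_of_nonneg_right hll
        (le_of_lt (div_pos hla hla1))
      calc Real.log a = Real.log (2 + 1/a) * (Real.log a / Real.log (2 + 1/a)) := by
            rw [mul_comm, div_mul_cancel₀ _ (ne_of_gt hla1)]
        _ ≤ Real.log (2 + 1/x) * (Real.log a / Real.log (2 + 1/a)) := h
    calc Real.log (2 + a / x) ≤ Real.log a + Real.log (2 + 1/x) := step1
      _ ≤ Real.log (2 + 1/x) * (Real.log a / Real.log (2 + 1/a)) + Real.log (2 + 1/x) := by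
          linarith
      _ = Real.log (2 + 1/x) * (Real.log a / Real.log (2 + 1/a) + 1) := by ring
end
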